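/- Let χ be a finite set, k, m ∈ ℕ with n = k·m, f, g ∈ ℝ, and h, φ : χ → ℝ. Let γ denote the standard Gaussian measure N(0,1) on ℝ. Then ∑_{x ∈ χⁿ} exp((f²/2)·(∑_{a=1}^{n} h(x_a))² + (g²/2)·∑_{l=0}^{k−1} (∑_{a=1}^{m} h(x_{a+l·m}))² + ∑_{a=1}^{n} φ(x_a)) = ∫_ℝ ( ∫_ℝ (∑_{t ∈ χ} exp(f·z·h(t) + g·y·h(t) + φ(t)))^m dγ(y) )^k dγ(z). -/
import Mathlib

open MeasureTheory ProbabilityTheory Real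

lemma pdf_eq (c d y : ℝ) : gaussianPDFReal 0 1 y * Real.exp (c * y + d)
    = Real.exp (c ^ 2 / 2 + d) * ((√(2 * π))⁻¹ * Real.exp (-(1/2) * (y - c) ^ 2)) := by
  simp only [gaussianPDFReal, NNReal.coe_one, mul_one, sub_zero]
  rw [mul_assoc, ← Real.exp_add, mul_comm (Real.exp _), mul_assoc, ← Real.exp_add]
  ring_nf

lemma gauss_to_vol (F : ℝ → ℝ) : ∫ y, F y ∂(gaussianReal 0 1)
    = ∫ y, gaussianPDFReal 0 1 y * F y := by
  rw [gaussianReal_of_var_ne_zero 0 one_ne_zero,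
    show gaussianPDF 0 1 = fun x => ((gaussianPDFReal 0 1 x).toNNReal : ENNReal) from rfl,
    integral_withDensity_eq_integral_smul (measurable_gaussianPDFReal 0 1).real_toNNReal F]
  congr 1 with y
  rw [NNReal.smul_def, smul_eq_mul, Real.coe_toNNReal _ (gaussianPDFReal_nonneg 0 1 y)]

lemma gauss_exp (c d : ℝ) :
    ∫ y, Real.exp (c * y + d) ∂(gaussianReal 0 1) = Real.exp (c ^ 2 / 2 + d) := by
  rw [gauss_to_vol]
  simp_rw [pdf_eq c d]
  rw [integral_const_mul, integral_const_mul, integral_sub_right_eq_self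
    (fun y => Real.exp (-(1/2) * y ^ 2)) c, integral_gaussian]
  rw [show π / (1/2) = 2 * π by ring]
  rw [inv_mul_cancel₀ (by positivity), mul_one]

lemma gauss_int_exp (c d : ℝ) :
    Integrable (fun y => Real.exp (c * y + d)) (gaussianReal 0 1) := by
  rw [gaussianReal_of_var_ne_zero 0 one_ne_zero,
    show gaussianPDF 0 1 = fun x => ((gaussianPDFReal 0 1 x).toNNReal : ENNReal) from rfl,
    integrable_withDensity_iff_integrable_smul (measurable_gaussianPDFReal 0 1).real_toNNReal]
  simp only [NNReal.smul_def, smul_eq_mul]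
  have : (fun y => ((gaussianPDFReal 0 1 y).toNNReal : ℝ) * Real.exp (c * y + d))
      = fun y => Real.exp (c ^ 2 / 2 + d) * ((√(2 * π))⁻¹ * Real.exp (-(1/2) * (y - c) ^ 2)) := by
    funext y
    rw [Real.coe_toNNReal _ (gaussianPDFReal_nonneg 0 1 y), pdf_eq]
  rw [this]
  exact (((integrable_exp_neg_mul_sq (by norm_num : (0:ℝ) < 1/2)).comp_sub_right c).const_mul
    _).const_mul _

theorem stmt_8 (χ : Type*) [Fintype χ] (k m : ℕ) (f g : ℝ) (h φ : χ → ℝ) :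
    ∑ x : Fin k × Fin m → χ,
        Real.exp ((f ^ 2 / 2) * (∑ a : Fin k × Fin m, h (x a)) ^ 2 +
          (g ^ 2 / 2) * ∑ l : Fin k, (∑ a : Fin m, h (x (l, a))) ^ 2 +
          ∑ a : Fin k × Fin m, φ (x a)) =
      ∫ z : ℝ,
          (∫ y : ℝ,
              (∑ t : χ, Real.exp (f * z * h t + g * y * h t + φ t)) ^ m
            ∂(gaussianReal 0 1)) ^ k
        ∂(gaussianReal 0 1) := by
  have key1 : ∀ z : ℝ,
      (∫ y : ℝ, (∑ t : χ, Real.exp (f * z * h t + g * y * h t + φ t)) ^ m ∂(gaussianReal 0 1))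
      = ∑ x : Fin m → χ, Real.exp (g ^ 2 / 2 * (∑ a, h (x a)) ^ 2
          + ∑ a, (f * z * h (x a) + φ (x a))) := by
    intro z
    have e1 : ∀ y : ℝ, (∑ t : χ, Real.exp (f * z * h t + g * y * h t + φ t)) ^ m
        = ∑ x : Fin m → χ, Real.exp ((g * ∑ a, h (x a)) * y
            + ∑ a, (f * z * h (x a) + φ (x a))) := by
      intro y
      rw [Fintype.sum_pow]
      refine Finset.sum_congr rfl fun x _ => ?_
      rw [← Real.exp_sum]
      congr 1
      simp only [Finset.sum_add_distrib, ← Finset.mul_sum]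
      ring
    simp_rw [e1]
    rw [integral_finset_sum _ fun x _ => gauss_int_exp _ _]
    refine Finset.sum_congr rfl fun x _ => ?_
    rw [gauss_exp]
    congr 1
    ring
  simp_rw [key1]
  have e2 : ∀ z : ℝ, (∑ x : Fin m → χ, Real.exp (g ^ 2 / 2 * (∑ a, h (x a)) ^ 2
        + ∑ a, (f * z * h (x a) + φ (x a)))) ^ k
      = ∑ X : Fin k → Fin m → χ, Real.exp ((f * ∑ l, ∑ a, h (X l a)) * z
          + ∑ l, (g ^ 2 / 2 * (∑ a, h (X l a)) ^ 2 + ∑ a, φ (X l a))) := by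
    intro z
    rw [Fintype.sum_pow]
    refine Finset.sum_congr rfl fun X _ => ?_
    rw [← Real.exp_sum]
    congr 1
    simp only [Finset.sum_add_distrib, ← Finset.mul_sum]
    ring
  simp_rw [e2]
  rw [integral_finset_sum _ fun X _ => gauss_int_exp _ _]
  refine Fintype.sum_equiv (Equiv.curry (Fin k) (Fin m) χ) _ _ fun x => ?_
  rw [gauss_exp]
  congr 1
  simp only [Equiv.curry_apply, Function.curry]
  simp only [Fintype.sum_prod_type, Finset.sum_add_distrib, ← Finset.mul_sum]
  ring
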